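/- Let q > 2 be a real number. There exists a constant C = C(q) > 0 such that for all real numbers a, b, |a+b|^q ≤ |a|^q + q|a|^{q-2}ab + C|a|^{q-2}b² + 2|b|^q. -/

import Mathlib

open Real

/-- Chord inequality for `x ^ p` on `[1, R]`. -/
lemma chord_aux (p R x : ℝ) (hp : 1 ≤ p) (hR : 1 < R) (h1 : 1 ≤ x) (h2 : x ≤ R) :
    x ^ p ≤ 1 + (R ^ p - 1) * ((x - 1) / (R - 1)) := by
  have hR0 : (0:ℝ) < R - 1 := by linarith
  set l : ℝ := (x - 1) / (R - 1) with hl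
  have hl0 : 0 ≤ l := div_nonneg (by linarith) hR0.le
  have hl1 : l ≤ 1 := by
    rw [hl, div_le_one hR0]; linarith
  have hx : x = (1 - l) * 1 + l * R := by
    have hlR : l * (R - 1) = x - 1 := by rw [hl]; exact div_mul_cancel₀ _ hR0.ne'
    linear_combination -hlR
  have := (convexOn_rpow hp).2 (by simp : (1:ℝ) ∈ Set.Ici (0:ℝ))
    (show R ∈ Set.Ici (0:ℝ) by simp; linarith)
    (by linarith : (0:ℝ) ≤ 1 - l) hl0 (by ring)
  simp only [smul_eq_mul, ← hx] at this
  calc x ^ p ≤ (1 - l) * (1:ℝ) ^ p + l * R ^ p := this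
    _ = 1 + (R ^ p - 1) * l := by rw [Real.one_rpow]; ring

/-- Tangent-line (Bernoulli) upper bound: `v ^ q ≤ 1 + q * v ^ (q-1) * (v - 1)` for `v > 0`. -/
lemma tangent_aux (v q : ℝ) (hv : 0 < v) (hq : 1 ≤ q) :
    v ^ q ≤ 1 + q * v ^ (q - 1) * (v - 1) := by
  have hs : (-1:ℝ) ≤ 1 / v - 1 := by
    have : 0 < 1 / v := by positivity
    linarith
  have hb := one_add_mul_self_le_rpow_one_add hs hq
  have h1v : (1 : ℝ) + (1 / v - 1) = 1 / v := by ring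
  rw [h1v] at hb
  have hpow : (1 / v) ^ q = 1 / v ^ q := by
    rw [Real.div_rpow zero_le_one hv.le, Real.one_rpow]
  rw [hpow] at hb
  have hvq : 0 < v ^ q := Real.rpow_pos_of_pos hv q
  have hmul : (1 + q * (1 / v - 1)) * v ^ q ≤ 1 := by
    calc (1 + q * (1 / v - 1)) * v ^ q ≤ (1 / v ^ q) * v ^ q :=
          mul_le_mul_of_nonneg_right hb hvq.le
      _ = 1 := by field_simp
  have hq1 : v ^ q * (1 / v) = v ^ (q - 1) := by
    rw [Real.rpow_sub hv, Real.rpow_one]; ring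
  have hv2 : v ^ (q - 1) * v = v ^ q := by
    rw [← Real.rpow_add_one hv.ne' (q - 1)]; ring_nf
  have hmul' : v ^ q + q * v ^ (q - 1) - q * v ^ q ≤ 1 := by
    have hexp : (1 + q * (1 / v - 1)) * v ^ q = v ^ q + q * (v ^ q * (1 / v)) - q * v ^ q := by
      ring
    rw [hexp, hq1] at hmul; linarith
  nlinarith [hv2]


set_option maxHeartbeats 1000000 in
/-- The key one-variable inequality. -/
lemma key_aux (q : ℝ) (hq : 2 < q) (t : ℝ) :
    |1 + t| ^ q ≤ 1 + q * t
      + (q * (q - 1) + q * (1 + (2:ℝ) ^ (q + 1)) ^ (q - 1) + 4 * q * (2:ℝ) ^ (q + 1) + 1) * t ^ 2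
      + 2 * |t| ^ q := by
  set T : ℝ := (2:ℝ) ^ (q + 1) with hTdef
  set C : ℝ := q * (q - 1) + q * (1 + T) ^ (q - 1) + 4 * q * T + 1 with hCdef
  clear_value T C
  have hq0 : (0:ℝ) < q := by linarith
  have hT1 : (1:ℝ) ≤ T := by
    rw [hTdef]; exact Real.one_le_rpow one_le_two (by linarith)
  have hT0 : (0:ℝ) < T := by linarith
  have hA1 : (1:ℝ) ≤ (1 + T) ^ (q - 1) :=
    Real.one_le_rpow (by linarith) (by linarith)
  have hqT : q ≤ T := by
    have := one_add_mul_self_le_rpow_one_add (by norm_num : (-1:ℝ) ≤ 1) (by linarith : 1 ≤ q + 1)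
    rw [hTdef]; norm_num at this ⊢; linarith
  have habs0 : (0:ℝ) ≤ |t| ^ q := Real.rpow_nonneg (abs_nonneg t) q
  have p1 : (0:ℝ) ≤ q * (q - 1) := mul_nonneg hq0.le (by linarith)
  have p2 : (0:ℝ) ≤ q * (1 + T) ^ (q - 1) := mul_nonneg hq0.le (by linarith)
  have p3 : (0:ℝ) ≤ 4 * q * T := by positivity
  have hC0 : (0:ℝ) ≤ C := by rw [hCdef]; linarith
  rcases le_or_gt t (-1/2 : ℝ) with ht | ht
  · -- t ≤ -1/2 : |1+t| ≤ |t|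
    have habs : |1 + t| ≤ |t| := by
      rcases le_or_gt t (-1) with h1 | h1
      · rw [abs_of_nonpos (by linarith), abs_of_nonpos (by linarith)]; linarith
      · rw [abs_of_nonneg (by linarith), abs_of_nonpos (by linarith)]; linarith
    have hpow : |1 + t| ^ q ≤ |t| ^ q :=
      Real.rpow_le_rpow (abs_nonneg _) habs hq0.le
    have hCt : 4 * q * T * t ^ 2 ≤ C * t ^ 2 :=
      mul_le_mul_of_nonneg_right (by rw [hCdef]; linarith) (sq_nonneg t)
    rcases le_or_gt (-t) T with h2 | h2
    · -- moderate negative t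
      have h4 : 0 ≤ q * (-t) * (4 * T * (-t) - 1) := by
        apply mul_nonneg (mul_nonneg hq0.le (by linarith))
        nlinarith
      have : 0 ≤ 1 + q * t + C * t ^ 2 := by nlinarith
      nlinarith
    · -- large negative t
      have htne : |t| = -t := abs_of_nonpos (by linarith)
      have h1 : T ^ (q - 1) ≤ |t| ^ (q - 1) :=
        Real.rpow_le_rpow (by linarith) (by rw [htne]; linarith) (by linarith)
      have h2' : T ≤ T ^ (q - 1) := by
        nth_rewrite 1 [← Real.rpow_one T]
        exact Real.rpow_le_rpow_of_exponent_le hT1 (by linarith)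
      have h3 : |t| ^ (q - 1) * |t| = |t| ^ q := by
        rw [← Real.rpow_add_one (by rw [htne]; intro h; nlinarith [h]) (q - 1)]
        ring_nf
      have h5 : q * |t| ≤ |t| ^ q := by
        calc q * |t| ≤ T ^ (q - 1) * |t| := by
              apply mul_le_mul_of_nonneg_right _ (abs_nonneg t)
              linarith
          _ ≤ |t| ^ (q - 1) * |t| := mul_le_mul_of_nonneg_right h1 (abs_nonneg t)
          _ = |t| ^ q := h3
      have hC2 : 0 ≤ C * t ^ 2 := mul_nonneg hC0 (sq_nonneg t)
      rw [htne] at h5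
      nlinarith
  · -- t > -1/2
    have h1t : (0:ℝ) < 1 + t := by linarith
    have habs : |1 + t| = 1 + t := abs_of_pos h1t
    rw [habs]
    rcases le_or_gt t T with ht2 | ht2
    · -- -1/2 < t ≤ T : tangent + chord/Bernoulli
      have htan := tangent_aux (1 + t) q h1t (by linarith)
      have hkey : q * ((1 + t) ^ (q - 1) - 1) * t ≤ C * t ^ 2 := by
        rcases le_or_gt 0 t with hts | hts
        · -- 0 ≤ t ≤ T : chord
          have hch := chord_aux (q - 1) (1 + T) (1 + t) (by linarith) (by linarith)
            (by linarith) (by linarith)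
          have hdiv : ((1 + T) ^ (q - 1) - 1) * ((1 + t - 1) / (1 + T - 1))
              ≤ (1 + T) ^ (q - 1) * t := by
            have : (1 + t - 1) / (1 + T - 1) = t / T := by ring_nf
            rw [this]
            have hdt : t / T ≤ t := by
              rw [div_le_iff₀ hT0]; nlinarith
            have h0 : 0 ≤ t / T := div_nonneg hts hT0.le
            nlinarith
          have hb : (1 + t) ^ (q - 1) - 1 ≤ (1 + T) ^ (q - 1) * t := by linarith
          have hstep2 : q * ((1 + t) ^ (q - 1) - 1) * t ≤ q * ((1 + T) ^ (q - 1) * t) * t := by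
            apply mul_le_mul_of_nonneg_right _ hts
            exact mul_le_mul_of_nonneg_left hb hq0.le
          have hstep3 : q * (1 + T) ^ (q - 1) * t ^ 2 ≤ C * t ^ 2 :=
            mul_le_mul_of_nonneg_right (by rw [hCdef]; linarith) (sq_nonneg t)
          calc q * ((1 + t) ^ (q - 1) - 1) * t ≤ q * ((1 + T) ^ (q - 1) * t) * t := hstep2
            _ = q * (1 + T) ^ (q - 1) * t ^ 2 := by ring
            _ ≤ C * t ^ 2 := hstep3
        · -- -1/2 < t < 0 : Bernoulli
          have hber := one_add_mul_self_le_rpow_one_add (by linarith : (-1:ℝ) ≤ t)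
            (by linarith : (1:ℝ) ≤ q - 1)
          have hb1 : (q - 1) * t ≤ (1 + t) ^ (q - 1) - 1 := by linarith
          have hb2 : t * ((1 + t) ^ (q - 1) - 1) ≤ t * ((q - 1) * t) :=
            mul_le_mul_of_nonpos_left hb1 hts.le
          have hb3 : q * (t * ((1 + t) ^ (q - 1) - 1)) ≤ q * (t * ((q - 1) * t)) :=
            mul_le_mul_of_nonneg_left hb2 hq0.le
          have hb4 : q * (q - 1) * t ^ 2 ≤ C * t ^ 2 :=
            mul_le_mul_of_nonneg_right (by rw [hCdef]; linarith) (sq_nonneg t)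
          calc q * ((1 + t) ^ (q - 1) - 1) * t = q * (t * ((1 + t) ^ (q - 1) - 1)) := by ring
            _ ≤ q * (t * ((q - 1) * t)) := hb3
            _ = q * (q - 1) * t ^ 2 := by ring
            _ ≤ C * t ^ 2 := hb4
      have heq : 1 + q * (1 + t) ^ (q - 1) * (1 + t - 1)
          = 1 + q * t + q * ((1 + t) ^ (q - 1) - 1) * t := by ring
      linarith [htan, hkey, habs0, heq.le, heq.ge]
    · -- t > T : chord at scale
      have ht0 : (0:ℝ) < t := by linarith
      have habs2 : |t| = t := abs_of_pos ht0
      rw [habs2]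
      have hx1 : (1:ℝ) ≤ 1 + 1 / t := by
        have : (0:ℝ) < 1 / t := by positivity
        linarith
      have hx2 : 1 + 1 / t ≤ 2 := by
        have : 1 / t ≤ 1 := by
          rw [div_le_one ht0]; linarith
        linarith
      have hch := chord_aux q 2 (1 + 1 / t) (by linarith) one_lt_two hx1 hx2
      have hch' : (1 + 1 / t) ^ q ≤ 1 + ((2:ℝ) ^ q - 1) * (1 / t) := by
        have : (1 + 1 / t - 1) / (2 - 1) = 1 / t := by ring
        rwa [this] at hch
      have hsplit : (1 + t) ^ q = t ^ q * (1 + 1 / t) ^ q := by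
        rw [← Real.mul_rpow ht0.le (by positivity)]
        congr 1
        field_simp
        ring
      have htq : (0:ℝ) < t ^ q := Real.rpow_pos_of_pos ht0 q
      have hstep : (1 + t) ^ q ≤ t ^ q + ((2:ℝ) ^ q - 1) * t ^ (q - 1) := by
        rw [hsplit]
        calc t ^ q * (1 + 1 / t) ^ q ≤ t ^ q * (1 + ((2:ℝ) ^ q - 1) * (1 / t)) :=
              mul_le_mul_of_nonneg_left hch' htq.le
          _ = t ^ q + ((2:ℝ) ^ q - 1) * (t ^ q * (1 / t)) := by ring
          _ = t ^ q + ((2:ℝ) ^ q - 1) * t ^ (q - 1) := by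
              rw [Real.rpow_sub ht0, Real.rpow_one]; ring
      have h2q : (2:ℝ) ^ q - 1 ≤ t := by
        have hTe : T = (2:ℝ) ^ q * 2 := by
          rw [hTdef, Real.rpow_add_one two_ne_zero q]
        have := Real.rpow_pos_of_pos two_pos q
        linarith [hTe.le, hTe.ge]
      have hlast : ((2:ℝ) ^ q - 1) * t ^ (q - 1) ≤ t ^ q := by
        have h3 : t ^ (q - 1) * t = t ^ q := by
          rw [← Real.rpow_add_one ht0.ne' (q - 1)]; ring_nf
        calc ((2:ℝ) ^ q - 1) * t ^ (q - 1) ≤ t * t ^ (q - 1) :=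
              mul_le_mul_of_nonneg_right h2q (Real.rpow_nonneg ht0.le _)
          _ = t ^ q := by rw [mul_comm]; exact h3
      have hpos : 0 ≤ 1 + q * t + C * t ^ 2 := by
        have h1 : 0 ≤ C * t ^ 2 := mul_nonneg hC0 (sq_nonneg t)
        have h2 : 0 ≤ q * t := mul_nonneg hq0.le ht0.le
        linarith
      linarith [hstep, hlast, hpos]

theorem stmt3 (q : ℝ) (hq : 2 < q) :
    ∃ C > 0, ∀ a b : ℝ,
      |a + b| ^ q ≤ |a| ^ q + q * |a| ^ (q - 2) * a * b
        + C * |a| ^ (q - 2) * b ^ (2 : ℕ) + 2 * |b| ^ q := by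
  set T : ℝ := (2:ℝ) ^ (q + 1) with hTdef
  set C : ℝ := q * (q - 1) + q * (1 + T) ^ (q - 1) + 4 * q * T + 1 with hCdef
  have hq0 : (0:ℝ) < q := by linarith
  have hT1 : (1:ℝ) ≤ T := Real.one_le_rpow one_le_two (by linarith)
  have hA1 : (1:ℝ) ≤ (1 + T) ^ (q - 1) := Real.one_le_rpow (by linarith) (by linarith)
  have hC0 : (0:ℝ) < C := by
    have p1 : (0:ℝ) ≤ q * (q - 1) := mul_nonneg hq0.le (by linarith)
    have p2 : (0:ℝ) ≤ q * (1 + T) ^ (q - 1) := mul_nonneg hq0.le (by linarith)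
    have p3 : (0:ℝ) ≤ 4 * q * T := by positivity
    rw [hCdef]; linarith
  refine ⟨C, hC0, fun a b => ?_⟩
  rcases eq_or_ne a 0 with rfl | ha
  · have h0 : |(0:ℝ)| ^ q = 0 := by
      rw [abs_zero, Real.zero_rpow (by linarith : q ≠ 0)]
    have h2 : |(0:ℝ)| ^ (q - 2) = 0 := by
      rw [abs_zero, Real.zero_rpow (by intro h; apply absurd h; intro h'; linarith [sub_eq_zero.mp h'] : q - 2 ≠ 0)]
    rw [zero_add, h0, h2]
    have : (0:ℝ) ≤ |b| ^ q := Real.rpow_nonneg (abs_nonneg b) q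
    ring_nf
    nlinarith
  · have haa : (0:ℝ) < |a| := abs_pos.mpr ha
    have hA : (0:ℝ) < |a| ^ q := Real.rpow_pos_of_pos haa q
    have hkey := key_aux q hq (b / a)
    have hmul := mul_le_mul_of_nonneg_left hkey hA.le
    have hA2 : |a| ^ q = |a| ^ (q - 2) * a ^ 2 := by
      rw [← sq_abs, ← Real.rpow_natCast |a| 2, ← Real.rpow_add haa]
      norm_num
    have e1 : |a| ^ q * |1 + b / a| ^ q = |a + b| ^ q := by
      rw [← Real.mul_rpow (abs_nonneg a) (abs_nonneg _), ← abs_mul]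
      congr 2
      field_simp
    have e2 : |a| ^ q * (q * (b / a)) = q * |a| ^ (q - 2) * a * b := by
      rw [hA2]; field_simp
    have e3 : |a| ^ q * (C * (b / a) ^ 2) = C * |a| ^ (q - 2) * b ^ 2 := by
      rw [hA2]; field_simp
    have e4 : |a| ^ q * (2 * |b / a| ^ q) = 2 * |b| ^ q := by
      rw [abs_div, Real.div_rpow (abs_nonneg b) (abs_nonneg a)]
      field_simp
    have hrhs : |a| ^ q * (1 + q * (b / a) + C * (b / a) ^ 2 + 2 * |b / a| ^ q)
        = |a| ^ q + q * |a| ^ (q - 2) * a * b + C * |a| ^ (q - 2) * b ^ 2 + 2 * |b| ^ q := by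
      rw [mul_add, mul_add, mul_add, e2, e3, e4, mul_one]
    rw [e1, hrhs] at hmul
    exact hmul
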